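/- Let F : [0,∞) → ℝ be twice continuously differentiable and let C > 0 satisfy F(|z|²/2) ≥ −C|z|² for all z ∈ ℂ. Define f(z) = z·F'(|z|²/2). Then for every R > 0 there exists a constant C(R) > 0 such that for all u, w ∈ ℂ with |u| ≤ R one has F(|u+w|²/2) − F(|u|²/2) − Re( f(u)·conj(w) ) ≥ −C(R)·|w|². -/

import Mathlib

open Complex

set_option maxHeartbeats 1000000

/-- complex analogue of estimate (H11). If `F : [0,∞) → ℝ` is `C²` and
`F(|z|²/2) ≥ -C|z|²` for all `z ∈ ℂ`, then for the nonlinearity `f z = z · F'(|z|²/2)`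
and every `R > 0` there is `C(R) > 0` such that whenever `|u| ≤ R`,
`F(|u+w|²/2) - F(|u|²/2) - Re (f u · conj w) ≥ -C(R) |w|²`.
(The derivative of `F` on `[0,∞)` is formalized as `derivWithin F (Set.Ici 0)`.) -/
theorem statement13 (F : ℝ → ℝ) (hF : ContDiffOn ℝ 2 F (Set.Ici 0))
    (C : ℝ) (hC : 0 < C)
    (hlow : ∀ z : ℂ, F (‖z‖ ^ 2 / 2) ≥ -C * ‖z‖ ^ 2)
    (f : ℂ → ℂ)
    (hf : ∀ z : ℂ, f z = z * ((derivWithin F (Set.Ici 0) (‖z‖ ^ 2 / 2) : ℝ) : ℂ)) :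
    ∀ R : ℝ, 0 < R → ∃ CR : ℝ, 0 < CR ∧ ∀ u w : ℂ, ‖u‖ ≤ R →
      F (‖u + w‖ ^ 2 / 2) - F (‖u‖ ^ 2 / 2) - (f u * (starRingEnd ℂ) w).re
        ≥ -CR * ‖w‖ ^ 2 := by
  intro R hR
  set F' : ℝ → ℝ := derivWithin F (Set.Ici 0) with hF'def
  set F'' : ℝ → ℝ := derivWithin F' (Set.Ici 0) with hF''def
  have hud : UniqueDiffOn ℝ (Set.Ici (0:ℝ)) := uniqueDiffOn_Ici 0
  have hF'c : ContDiffOn ℝ 1 F' (Set.Ici 0) := hF.derivWithin hud (by norm_num)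
  have hFd : ∀ x ∈ Set.Ici (0:ℝ), HasDerivWithinAt F (F' x) (Set.Ici 0) x := by
    intro x hx
    exact ((hF.differentiableOn (by norm_num)) x hx).hasDerivWithinAt
  have hF'd : ∀ x ∈ Set.Ici (0:ℝ), HasDerivWithinAt F' (F'' x) (Set.Ici 0) x := by
    intro x hx
    exact ((hF'c.differentiableOn (by norm_num)) x hx).hasDerivWithinAt
  set K : ℝ := 2 * R ^ 2 with hKdef
  have hK : 0 ≤ K := by positivity
  have hIK : Set.Icc (0:ℝ) K ⊆ Set.Ici 0 := Set.Icc_subset_Ici_self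
  obtain ⟨M, hM⟩ := isCompact_Icc.exists_bound_of_continuousOn (hF.continuousOn.mono hIK)
  obtain ⟨M', hM'⟩ := isCompact_Icc.exists_bound_of_continuousOn (hF'c.continuousOn.mono hIK)
  obtain ⟨L, hL⟩ := isCompact_Icc.exists_bound_of_continuousOn
    ((hF'c.continuousOn_derivWithin hud le_rfl).mono hIK)
  have hM0 : 0 ≤ M := le_trans (norm_nonneg _) (hM 0 ⟨le_refl 0, hK⟩)
  have hM'0 : 0 ≤ M' := le_trans (norm_nonneg _) (hM' 0 ⟨le_refl 0, hK⟩)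
  have hL0 : 0 ≤ L := le_trans (norm_nonneg _) (hL 0 ⟨le_refl 0, hK⟩)
  -- Lipschitz bound for F' on Icc 0 K
  have hlip : ∀ x ∈ Set.Icc (0:ℝ) K, ∀ y ∈ Set.Icc (0:ℝ) K, |F' y - F' x| ≤ L * |y - x| := by
    intro x hx y hy
    have := (convex_Icc (0:ℝ) K).norm_image_sub_le_of_norm_hasDerivWithin_le
      (fun z hz => (hF'd z (hIK hz)).mono hIK) (fun z hz => hL z hz) hx hy
    simpa [Real.norm_eq_abs] using this
  refine ⟨4*C + M/R^2 + 3*M' + 4*L*R^2 + 1, by positivity, ?_⟩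
  intro u w hu
  have hre : (f u * (starRingEnd ℂ) w).re = F' (‖u‖^2/2) * (u * (starRingEnd ℂ) w).re := by
    rw [hf u, mul_right_comm]
    rw [mul_comm (u * (starRingEnd ℂ) w) _]
    exact Complex.re_ofReal_mul _ _
  set p : ℝ := (u * (starRingEnd ℂ) w).re with hpdef
  have hb_eq : ‖u + w‖ ^ 2 = ‖u‖ ^ 2 + 2 * p + ‖w‖ ^ 2 := by
    rw [hpdef,
      Complex.sq_norm, Complex.sq_norm, Complex.sq_norm, Complex.normSq_add]
    ring
  have hp_abs : |p| ≤ ‖u‖ * ‖w‖ := by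
    calc |p| ≤ ‖u * (starRingEnd ℂ) w‖ := Complex.abs_re_le_norm _
    _ = ‖u‖ * ‖w‖ := by
        rw [norm_mul, Complex.norm_conj]
  have hw0 : 0 ≤ ‖w‖ := norm_nonneg w
  have hu0 : 0 ≤ ‖u‖ := norm_nonneg u
  set a : ℝ := ‖u‖ ^ 2 / 2 with hadef
  set b : ℝ := ‖u + w‖ ^ 2 / 2 with hbdef
  have ha_mem : a ∈ Set.Icc (0:ℝ) K := ⟨by positivity, by nlinarith⟩
  have hM'a : |F' a| ≤ M' := by simpa [Real.norm_eq_abs] using hM' a ha_mem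
  rw [hre]
  rcases le_or_gt ‖w‖ R with hwR | hwR
  · -- small w: Taylor estimate
    have hb_mem : b ∈ Set.Icc (0:ℝ) K := by
      constructor
      · positivity
      · have h5 : ‖u + w‖ ≤ ‖u‖ + ‖w‖ := norm_add_le u w
        have h6 : ‖u + w‖ ^ 2 ≤ (‖u‖ + ‖w‖) ^ 2 := by nlinarith [norm_nonneg (u + w)]
        rw [hbdef, hKdef]; nlinarith
    have hba : b - a = p + ‖w‖ ^ 2 / 2 := by rw [hadef, hbdef, hb_eq]; ring
    have hba_abs : |b - a| ≤ 2 * R * ‖w‖ := by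
      rw [hba]
      have h1 : |p + ‖w‖^2/2| ≤ |p| + ‖w‖^2/2 := by
        calc |p + ‖w‖^2/2| ≤ |p| + |‖w‖^2/2| := abs_add_le _ _
        _ = |p| + ‖w‖^2/2 := by
            congr 1
            exact _root_.abs_of_nonneg (by positivity)
      nlinarith [abs_nonneg p]
    -- Taylor: |F b - F a - F' a * (b - a)| ≤ L * |b-a|^2
    have hsub : Set.Icc (min a b) (max a b) ⊆ Set.Icc (0:ℝ) K := Set.Icc_subset_Icc
      (le_min ha_mem.1 hb_mem.1) (max_le ha_mem.2 hb_mem.2)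
    have htaylor : |F b - F a - F' a * (b - a)| ≤ (L * |b - a|) * |b - a| := by
      have key := (convex_Icc (min a b) (max a b)).norm_image_sub_le_of_norm_hasDerivWithin_le
        (f := fun x => F x - F' a * x) (f' := fun x => F' x - F' a) (C := L * |b - a|)
        (fun x hx => by
          have hder := ((hFd x (hIK (hsub hx))).mono (hsub.trans hIK)).sub
            ((hasDerivWithinAt_id x (Set.Icc (min a b) (max a b))).const_mul (F' a))
          simpa [Pi.sub_def] using hder)
        (fun x hx => by
          have h1 : |F' x - F' a| ≤ L * |x - a| := hlip a ha_mem x (hsub hx)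
          obtain ⟨hx1, hx2⟩ := hx
          have h2 : |x - a| ≤ |b - a| := by
            rcases le_total a b with h | h
            · rw [min_eq_left h] at hx1
              rw [max_eq_right h] at hx2
              rw [_root_.abs_of_nonneg (by linarith : (0:ℝ) ≤ x - a),
                _root_.abs_of_nonneg (by linarith : (0:ℝ) ≤ b - a)]
              linarith
            · rw [min_eq_right h] at hx1
              rw [max_eq_left h] at hx2
              rw [_root_.abs_of_nonpos (by linarith : x - a ≤ 0),
                _root_.abs_of_nonpos (by linarith : b - a ≤ 0)]
              linarith
          calc ‖F' x - F' a‖ = |F' x - F' a| := rfl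
          _ ≤ L * |x - a| := h1
          _ ≤ L * |b - a| := by nlinarith [abs_nonneg (x - a)]
        )
        ⟨min_le_left a b, le_max_left a b⟩ ⟨min_le_right a b, le_max_right a b⟩
      have : F b - F' a * b - (F a - F' a * a) = F b - F a - F' a * (b - a) := by ring
      simpa [Real.norm_eq_abs, this] using key
    have h1 := abs_le.mp htaylor
    have h2 := abs_le.mp hba_abs
    have h3 := abs_le.mp hM'a
    have h4 := abs_nonneg (b - a)
    have hq1 : |b - a| * |b - a| ≤ (2*R*‖w‖) * (2*R*‖w‖) :=
      mul_le_mul hba_abs hba_abs h4 (by positivity)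
    have hq : L * (|b - a| * |b - a|) ≤ L * ((2*R*‖w‖) * (2*R*‖w‖)) :=
      mul_le_mul_of_nonneg_left hq1 hL0
    have key : F b - F a - F' a * (b - a) ≥ -(L * (2*R*‖w‖)^2) := by
      nlinarith [h1.1]
    rw [show F' a * p = F' a * (b - a) - F' a * (‖w‖^2/2) by rw [hba]; ring]
    nlinarith [key, mul_le_mul_of_nonneg_right h3.1 (sq_nonneg ‖w‖),
      mul_nonneg hC.le (sq_nonneg ‖w‖),
      mul_nonneg (div_nonneg hM0 (sq_nonneg R)) (sq_nonneg ‖w‖),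
      mul_nonneg hM'0 (sq_nonneg ‖w‖), sq_nonneg ‖w‖]
  · -- large w
    have hFb := hlow (u + w)
    have hFa : |F a| ≤ M := by simpa [Real.norm_eq_abs] using hM a ha_mem
    have h1 := abs_le.mp hFa
    have h2 := abs_le.mp hM'a
    have h3 := abs_le.mp hp_abs
    have hMw : M ≤ M / R^2 * ‖w‖^2 := by
      rw [div_mul_eq_mul_div, le_div_iff₀ (by positivity)]
      nlinarith [mul_le_mul_of_nonneg_left (mul_self_le_mul_self hR.le hwR.le) hM0]
    have hupw : ‖u + w‖^2 ≤ 4 * ‖w‖^2 := by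
      have h6 : ‖u + w‖ ≤ ‖u‖ + ‖w‖ := norm_add_le u w
      have h7 : ‖u + w‖^2 ≤ (‖u‖ + ‖w‖)^2 := by
        nlinarith [norm_nonneg (u + w)]
      nlinarith [h7, hu, hwR.le, hw0, hu0]
    have hp4 : |F' a * p| ≤ M' * ‖w‖^2 := by
      rw [abs_mul]
      have h8 : |p| ≤ R * ‖w‖ :=
        le_trans hp_abs (mul_le_mul_of_nonneg_right hu hw0)
      calc |F' a| * |p| ≤ M' * (R * ‖w‖) :=
            mul_le_mul hM'a h8 (abs_nonneg p) hM'0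
      _ ≤ M' * ‖w‖^2 := by
          nlinarith [mul_le_mul_of_nonneg_left
            (mul_le_mul_of_nonneg_right hwR.le hw0) hM'0]
    have h5 := abs_le.mp hp4
    nlinarith [hFb, mul_le_mul_of_nonneg_left hupw hC.le, h1.1, hMw, h5.1,
      sq_nonneg ‖w‖, mul_nonneg hM'0 (sq_nonneg ‖w‖),
      mul_nonneg (mul_nonneg hL0 (sq_nonneg R)) (sq_nonneg ‖w‖)]
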